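/- Let C ≥ 0 and τ₀ ≥ 4, and let f : [τ₀, ∞) → ℝ be a differentiable function with f(τ) ≥ 0 and f'(τ) ≤ −f(τ) + C/τ² for all τ ≥ τ₀. Then for all τ ≥ τ₀, f(τ) ≤ e^{τ₀ − τ} f(τ₀) + 2C/τ². -/

import Mathlib

/-- Gronwall-type decay: if `C ≥ 0`, `τ₀ ≥ 4`, and `f` is differentiable on `[τ₀, ∞)` with
`f ≥ 0` and `f' ≤ -f + C/τ²` there, then `f(τ) ≤ e^{τ₀ - τ} f(τ₀) + 2C/τ²` for `τ ≥ τ₀`. -/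
theorem gronwall_decay (C τ₀ : ℝ) (hC : 0 ≤ C) (hτ₀ : 4 ≤ τ₀) (f : ℝ → ℝ)
    (hdiff : ∀ τ, τ₀ ≤ τ → DifferentiableAt ℝ f τ)
    (hpos : ∀ τ, τ₀ ≤ τ → 0 ≤ f τ)
    (hineq : ∀ τ, τ₀ ≤ τ → deriv f τ ≤ -f τ + C / τ ^ 2) :
    ∀ τ, τ₀ ≤ τ → f τ ≤ Real.exp (τ₀ - τ) * f τ₀ + 2 * C / τ ^ 2 := by
  intro τ hτ
  set g : ℝ → ℝ := fun t => Real.exp t * f t - 2 * C * (Real.exp t / t ^ 2) with hg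
  have hder : ∀ t, τ₀ ≤ t → HasDerivAt g
      (Real.exp t * f t + Real.exp t * deriv f t -
        2 * C * ((Real.exp t * t ^ 2 - Real.exp t * (2 * t)) / (t ^ 2) ^ 2)) t := by
    intro t ht
    have htpos : (0:ℝ) < t := by linarith
    have h1 : HasDerivAt (fun t => Real.exp t * f t)
        (Real.exp t * f t + Real.exp t * deriv f t) t := by
      exact (Real.hasDerivAt_exp t).mul ((hdiff t ht).hasDerivAt)
    have h2 : HasDerivAt (fun t => Real.exp t / t ^ 2)
        ((Real.exp t * t ^ 2 - Real.exp t * (2 * t)) / (t ^ 2) ^ 2) t := by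
      have : HasDerivAt (fun t => Real.exp t / t ^ 2) _ t :=
        (Real.hasDerivAt_exp t).div (hasDerivAt_pow 2 t) (by positivity)
      convert this using 2
      ring
    exact h1.sub (h2.const_mul (2 * C))
  have hmono : AntitoneOn g (Set.Ici τ₀) := by
    apply antitoneOn_of_deriv_nonpos (convex_Ici τ₀)
    · exact fun t ht => ((hder t ht).differentiableAt.continuousAt).continuousWithinAt
    · intro t ht
      rw [interior_Ici] at ht
      exact (hder t ht.le).differentiableAt.differentiableWithinAt
    · intro t ht
      rw [interior_Ici] at ht
      have ht' : τ₀ ≤ t := ht.le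
      have htpos : (0:ℝ) < t := by linarith
      rw [(hder t ht').deriv]
      have h1 := hineq t ht'
      have hE : (0:ℝ) < Real.exp t := Real.exp_pos t
      have key : Real.exp t * f t + Real.exp t * deriv f t ≤ Real.exp t * (C / t ^ 2) := by
        have := mul_le_mul_of_nonneg_left h1 hE.le
        nlinarith
      have hrw : 2 * C * ((Real.exp t * t ^ 2 - Real.exp t * (2 * t)) / (t ^ 2) ^ 2)
          = 2 * C * Real.exp t * (t - 2) / t ^ 3 := by
        field_simp
      have key2 : Real.exp t * (C / t ^ 2) ≤ 2 * C * Real.exp t * (t - 2) / t ^ 3 := by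
        rw [show Real.exp t * (C / t ^ 2) = Real.exp t * C / t ^ 2 by ring,
          div_le_div_iff₀ (by positivity) (by positivity)]
        have ht4 : (4:ℝ) ≤ t := by linarith
        nlinarith [mul_nonneg (mul_nonneg (mul_nonneg hC hE.le) (sq_nonneg t))
          (sub_nonneg.mpr ht4)]
      rw [hrw]
      linarith
  have hgle : g τ ≤ g τ₀ := hmono Set.self_mem_Ici hτ hτ
  have hτpos : (0:ℝ) < τ := by linarith
  have hEτ : (0:ℝ) < Real.exp τ := Real.exp_pos τ
  have hterm : 0 ≤ 2 * C * (Real.exp τ₀ / τ₀ ^ 2) := by positivity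
  have h2 : Real.exp τ * f τ ≤ Real.exp τ₀ * f τ₀ + 2 * C * (Real.exp τ / τ ^ 2) := by
    simp only [hg] at hgle
    linarith
  have hexp : Real.exp τ * Real.exp (τ₀ - τ) = Real.exp τ₀ := by
    rw [← Real.exp_add]; ring_nf
  rw [← mul_le_mul_iff_right₀ hEτ, mul_add, ← mul_assoc, hexp]
  have heq : Real.exp τ * (2 * C / τ ^ 2) = 2 * C * (Real.exp τ / τ ^ 2) := by ring
  linarith
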